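/- In every 2-coloring of the edges of the complete graph K_9 with colors red and blue, there is either a red triangle (K_3) or a blue K_4. -/

import Mathlib

open Finset

private lemma triple_card {u a b : Fin 9} (hua : u ≠ a) (hub : u ≠ b) (hab : a ≠ b) :
    ({u, a, b} : Finset (Fin 9)).card = 3 :=
  Finset.card_eq_three.mpr ⟨u, a, b, hua, hub, hab, rfl⟩

private lemma red_triple (G : SimpleGraph (Fin 9)) {u a b : Fin 9}
    (hua : G.Adj u a) (hub : G.Adj u b) (hab : G.Adj a b) :
    ∀ x ∈ ({u, a, b} : Finset (Fin 9)), ∀ y ∈ ({u, a, b} : Finset (Fin 9)),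
      x ≠ y → G.Adj x y := by
  intro x hx y hy hxy
  simp only [mem_insert, mem_singleton] at hx hy
  rcases hx with rfl | rfl | rfl <;> rcases hy with rfl | rfl | rfl <;>
    first
      | exact absurd rfl hxy
      | assumption
      | exact G.adj_symm ‹_›

private lemma blue_triple (G : SimpleGraph (Fin 9)) {u a b : Fin 9}
    (hua : ¬ G.Adj u a) (hub : ¬ G.Adj u b) (hab : ¬ G.Adj a b) :
    ∀ x ∈ ({u, a, b} : Finset (Fin 9)), ∀ y ∈ ({u, a, b} : Finset (Fin 9)),
      x ≠ y → ¬ G.Adj x y := by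
  intro x hx y hy hxy
  simp only [mem_insert, mem_singleton] at hx hy
  rcases hx with rfl | rfl | rfl <;> rcases hy with rfl | rfl | rfl <;>
    first
      | exact absurd rfl hxy
      | assumption
      | exact fun h => ‹¬ G.Adj _ _› (G.adj_symm h)

/-- R(3,3) ≤ 6 : inside any 6-element set there is a red or a blue triangle. -/
private lemma r33 (G : SimpleGraph (Fin 9)) [DecidableRel G.Adj] (t : Finset (Fin 9))
    (ht : 6 ≤ t.card) :
    (∃ s : Finset (Fin 9), s ⊆ t ∧ s.card = 3 ∧ ∀ a ∈ s, ∀ b ∈ s, a ≠ b → G.Adj a b) ∨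
    (∃ s : Finset (Fin 9), s ⊆ t ∧ s.card = 3 ∧ ∀ a ∈ s, ∀ b ∈ s, a ≠ b → ¬ G.Adj a b) := by
  obtain ⟨u, hu⟩ := Finset.card_pos.mp (by omega : 0 < t.card)
  have hcard : ((t.erase u).filter (fun x => G.Adj u x)).card
      + ((t.erase u).filter (fun x => ¬ G.Adj u x)).card = (t.erase u).card :=
    Finset.card_filter_add_card_filter_not _
  have herase : (t.erase u).card = t.card - 1 := Finset.card_erase_of_mem hu
  rcases (by omega : 3 ≤ ((t.erase u).filter (fun x => G.Adj u x)).card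
      ∨ 3 ≤ ((t.erase u).filter (fun x => ¬ G.Adj u x)).card) with hr | hb
  · obtain ⟨s, hs, hs3⟩ := Finset.exists_subset_card_eq hr
    obtain ⟨a, b, c, hab, hac, hbc, rfl⟩ := Finset.card_eq_three.mp hs3
    have ha := hs (show a ∈ ({a, b, c} : Finset (Fin 9)) by simp)
    have hb' := hs (show b ∈ ({a, b, c} : Finset (Fin 9)) by simp)
    have hc := hs (show c ∈ ({a, b, c} : Finset (Fin 9)) by simp)
    simp only [mem_filter, mem_erase] at ha hb' hc
    have sub : ∀ x ∈ ({a, b, c} : Finset (Fin 9)), x ∈ t := by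
      intro x hx
      simp only [mem_insert, mem_singleton] at hx
      rcases hx with rfl | rfl | rfl
      exacts [ha.1.2, hb'.1.2, hc.1.2]
    by_cases h1 : G.Adj a b
    · exact Or.inl ⟨{u, a, b}, by
        intro x hx
        simp only [mem_insert, mem_singleton] at hx
        rcases hx with rfl | rfl | rfl
        exacts [hu, ha.1.2, hb'.1.2],
        triple_card (fun h => ha.1.1 h.symm) (fun h => hb'.1.1 h.symm) hab,
        red_triple G ha.2 hb'.2 h1⟩
    by_cases h2 : G.Adj a c
    · exact Or.inl ⟨{u, a, c}, by
        intro x hx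
        simp only [mem_insert, mem_singleton] at hx
        rcases hx with rfl | rfl | rfl
        exacts [hu, ha.1.2, hc.1.2],
        triple_card (fun h => ha.1.1 h.symm) (fun h => hc.1.1 h.symm) hac,
        red_triple G ha.2 hc.2 h2⟩
    by_cases h3 : G.Adj b c
    · exact Or.inl ⟨{u, b, c}, by
        intro x hx
        simp only [mem_insert, mem_singleton] at hx
        rcases hx with rfl | rfl | rfl
        exacts [hu, hb'.1.2, hc.1.2],
        triple_card (fun h => hb'.1.1 h.symm) (fun h => hc.1.1 h.symm) hbc,
        red_triple G hb'.2 hc.2 h3⟩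
    · exact Or.inr ⟨{a, b, c}, sub, triple_card hab hac hbc, blue_triple G h1 h2 h3⟩
  · obtain ⟨s, hs, hs3⟩ := Finset.exists_subset_card_eq hb
    obtain ⟨a, b, c, hab, hac, hbc, rfl⟩ := Finset.card_eq_three.mp hs3
    have ha := hs (show a ∈ ({a, b, c} : Finset (Fin 9)) by simp)
    have hb' := hs (show b ∈ ({a, b, c} : Finset (Fin 9)) by simp)
    have hc := hs (show c ∈ ({a, b, c} : Finset (Fin 9)) by simp)
    simp only [mem_filter, mem_erase] at ha hb' hc
    have sub : ∀ x ∈ ({a, b, c} : Finset (Fin 9)), x ∈ t := by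
      intro x hx
      simp only [mem_insert, mem_singleton] at hx
      rcases hx with rfl | rfl | rfl
      exacts [ha.1.2, hb'.1.2, hc.1.2]
    by_cases h1 : G.Adj a b
    · by_cases h2 : G.Adj a c
      · by_cases h3 : G.Adj b c
        · exact Or.inl ⟨{a, b, c}, sub, triple_card hab hac hbc, red_triple G h1 h2 h3⟩
        · exact Or.inr ⟨{u, b, c}, by
            intro x hx
            simp only [mem_insert, mem_singleton] at hx
            rcases hx with rfl | rfl | rfl
            exacts [hu, hb'.1.2, hc.1.2],
            triple_card (fun h => hb'.1.1 h.symm) (fun h => hc.1.1 h.symm) hbc,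
            blue_triple G hb'.2 hc.2 h3⟩
      · exact Or.inr ⟨{u, a, c}, by
          intro x hx
          simp only [mem_insert, mem_singleton] at hx
          rcases hx with rfl | rfl | rfl
          exacts [hu, ha.1.2, hc.1.2],
          triple_card (fun h => ha.1.1 h.symm) (fun h => hc.1.1 h.symm) hac,
          blue_triple G ha.2 hc.2 h2⟩
    · exact Or.inr ⟨{u, a, b}, by
        intro x hx
        simp only [mem_insert, mem_singleton] at hx
        rcases hx with rfl | rfl | rfl
        exacts [hu, ha.1.2, hb'.1.2],
        triple_card (fun h => ha.1.1 h.symm) (fun h => hb'.1.1 h.symm) hab,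
        blue_triple G ha.2 hb'.2 h1⟩

/-- Ramsey: in every red/blue coloring of the edges of `K₉` (the red graph being `G`
and the blue graph its complement), there is a red triangle or a blue `K₄`. -/
theorem ramsey_three_four (G : SimpleGraph (Fin 9)) :
    (∃ s : Finset (Fin 9), s.card = 3 ∧ ∀ a ∈ s, ∀ b ∈ s, a ≠ b → G.Adj a b) ∨
    (∃ s : Finset (Fin 9), s.card = 4 ∧ ∀ a ∈ s, ∀ b ∈ s, a ≠ b → ¬ G.Adj a b) := by
  classical
  by_cases hbig : ∃ v : Fin 9, 4 ≤ G.degree v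
  · -- a vertex with ≥ 4 red neighbours
    obtain ⟨v, hv⟩ := hbig
    obtain ⟨s, hs, hs4⟩ := Finset.exists_subset_card_eq
      (show 4 ≤ (G.neighborFinset v).card by rwa [G.card_neighborFinset_eq_degree])
    have hadj : ∀ x ∈ s, G.Adj v x := fun x hx =>
      (SimpleGraph.mem_neighborFinset G v x).mp (hs hx)
    by_cases hcl : ∀ a ∈ s, ∀ b ∈ s, a ≠ b → ¬ G.Adj a b
    · exact Or.inr ⟨s, hs4, hcl⟩
    · push_neg at hcl
      obtain ⟨a, ha, b, hb, hab, hGab⟩ := hcl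
      have hva : v ≠ a := fun h => G.loopless.irrefl a (h ▸ hadj a ha)
      have hvb : v ≠ b := fun h => G.loopless.irrefl b (h ▸ hadj b hb)
      exact Or.inl ⟨{v, a, b}, triple_card hva hvb hab,
        red_triple G (hadj a ha) (hadj b hb) hGab⟩
  by_cases hsmall : ∃ v : Fin 9, G.degree v ≤ 2
  · -- a vertex with ≥ 6 blue neighbours
    obtain ⟨v, hv⟩ := hsmall
    set M : Finset (Fin 9) := (Finset.univ.erase v).filter (fun x => ¬ G.Adj v x) with hM
    have hcard : (G.neighborFinset v).card + M.card = 8 := by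
      have h1 : (Finset.univ.erase v).filter (fun x => G.Adj v x) = G.neighborFinset v := by
        ext x
        simp only [mem_filter, mem_erase, Finset.mem_univ, true_and, and_true,
          SimpleGraph.mem_neighborFinset]
        constructor
        · exact fun h => h.2
        · intro h
          exact ⟨fun he => G.loopless.irrefl v (by rwa [he] at h), h⟩
      have h2 := Finset.card_filter_add_card_filter_not
        (s := Finset.univ.erase v) (p := fun x => G.Adj v x)
      rw [h1, ← hM] at h2
      have h3 : (Finset.univ.erase v).card = 8 := by
        rw [Finset.card_erase_of_mem (Finset.mem_univ v)]
        simp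
      omega
    have hM6 : 6 ≤ M.card := by
      have := G.card_neighborFinset_eq_degree v
      omega
    rcases r33 G M hM6 with ⟨s, _, hs3, hred⟩ | ⟨s, hsub, hs3, hblue⟩
    · exact Or.inl ⟨s, hs3, hred⟩
    · have hvM : ∀ x ∈ s, v ≠ x ∧ ¬ G.Adj v x := by
        intro x hx
        have := hsub hx
        simp only [hM, mem_filter, mem_erase, Finset.mem_univ, true_and] at this
        exact ⟨fun h => this.1.1 h.symm, this.2⟩
      have hvs : v ∉ s := fun h => (hvM v h).1 rfl
      refine Or.inr ⟨insert v s, by rw [Finset.card_insert_of_notMem hvs, hs3], ?_⟩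
      intro x hx y hy hxy
      simp only [mem_insert] at hx hy
      rcases hx with rfl | hx
      · rcases hy with rfl | hy
        · exact absurd rfl hxy
        · exact (hvM y hy).2
      · rcases hy with rfl | hy
        · exact fun h => (hvM x hx).2 (G.adj_symm h)
        · exact hblue x hx y hy hxy
  · -- all degrees equal 3 : parity contradiction
    exfalso
    push_neg at hbig hsmall
    have hdeg : ∀ v : Fin 9, G.degree v = 3 := fun v => by
      have := hbig v; have := hsmall v; omega
    have hsum := SimpleGraph.sum_degrees_eq_twice_card_edges G
    rw [Finset.sum_congr rfl (fun v _ => hdeg v)] at hsum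
    simp only [Finset.sum_const, Finset.card_univ, Fintype.card_fin, smul_eq_mul] at hsum
    omega
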